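/- Let Z be any subset of a compact metric space X with continuous T, and let M(X) be the space of Borel probability measures. Then the packing topological entropy satisfies h_top^P(T,Z) ≥ sup{ \bar{h}_μ(T) : μ ∈ M(X), μ is Borel with μ(Z) = 1 and Z Borel }, where \bar{h}_μ(T) = ∫ \bar{h}_μ(T,x) dμ(x) is the upper local (Brin–Katok) entropy of μ. -/

import Mathlib

open Filter MeasureTheory Topology
open scoped ENNReal

variable {X : Type*} [MetricSpace X]


/-- The (open) Bowen ball of length `n` and radius `ε`. -/
def bowenBall (T : X → X) (x : X) (n : ℕ) (ε : ℝ) : Set X :=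
  {y | ∀ i < n, dist (T^[i] x) (T^[i] y) < ε}

/-- The closed Bowen ball of length `n` and radius `ε`. -/
def closedBowenBall (T : X → X) (x : X) (n : ℕ) (ε : ℝ) : Set X :=
  {y | ∀ i < n, dist (T^[i] x) (T^[i] y) ≤ ε}

/-- `E` is an `(n,ε)`-separated set for `T`. -/
def IsSep (T : X → X) (n : ℕ) (ε : ℝ) (E : Finset X) : Prop :=
  ∀ x ∈ E, ∀ y ∈ E, x ≠ y → ∃ i < n, ε < dist (T^[i] x) (T^[i] y)

/-- Maximal cardinality of an `(n,ε)`-separated subset of `Z`. -/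
noncomputable def sepNum (T : X → X) (Z : Set X) (n : ℕ) (ε : ℝ) : ℕ :=
  sSup {k | ∃ E : Finset X, ↑E ⊆ Z ∧ IsSep T n ε E ∧ E.card = k}

/-- Upper capacity topological entropy of `T` on `Z`. -/
noncomputable def ucEntropy (T : X → X) (Z : Set X) : EReal :=
  ⨆ (ε : ℝ) (_ : 0 < ε),
    Filter.limsup (fun n : ℕ => ((Real.log (sepNum T Z n ε) / n : ℝ) : EReal)) Filter.atTop

/-- The Carathéodory sum `M^s_{N,ε}(Z)` for Bowen entropy. -/
noncomputable def bowenM (T : X → X) (Z : Set X) (s : ℝ) (N : ℕ) (ε : ℝ) : ℝ≥0∞ :=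
  ⨅ (c : Set (X × ℕ)) (_ : c.Countable ∧ (∀ p ∈ c, N ≤ p.2) ∧
      Z ⊆ ⋃ p ∈ c, bowenBall T p.1 p.2 ε),
    ∑' p : c, ENNReal.ofReal (Real.exp (-s * ((p : X × ℕ).2 : ℝ)))

/-- `M^s_ε(Z) = lim_N M^s_{N,ε}(Z)` (the limit is the supremum by monotonicity). -/
noncomputable def bowenMs (T : X → X) (Z : Set X) (s : ℝ) (ε : ℝ) : ℝ≥0∞ :=
  ⨆ N : ℕ, bowenM T Z s N ε

/-- Bowen topological entropy of `T` on `Z`. -/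
noncomputable def bowenEntropy (T : X → X) (Z : Set X) : EReal :=
  ⨆ (ε : ℝ) (_ : 0 < ε), sInf ((fun s : ℝ => (s : EReal)) '' {s : ℝ | bowenMs T Z s ε = 0})

/-- The packing pre-sum `P^s_{N,ε}(Z)`, a supremum over disjoint families of closed
Bowen balls with centers in `Z` and lengths at least `N`. -/
noncomputable def packP (T : X → X) (Z : Set X) (s : ℝ) (N : ℕ) (ε : ℝ) : ℝ≥0∞ :=
  ⨆ (c : Set (X × ℕ)) (_ : c.Countable ∧ (∀ p ∈ c, p.1 ∈ Z ∧ N ≤ p.2) ∧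
      c.PairwiseDisjoint (fun p => closedBowenBall T p.1 p.2 ε)),
    ∑' p : c, ENNReal.ofReal (Real.exp (-s * ((p : X × ℕ).2 : ℝ)))

/-- `P^s_ε(Z) = lim_N P^s_{N,ε}(Z)` (the limit is the infimum by monotonicity). -/
noncomputable def packPre (T : X → X) (Z : Set X) (s : ℝ) (ε : ℝ) : ℝ≥0∞ :=
  ⨅ N : ℕ, packP T Z s N ε

/-- The packing outer quantity `𝒫^s_ε(Z)`. -/
noncomputable def packM (T : X → X) (Z : Set X) (s : ℝ) (ε : ℝ) : ℝ≥0∞ :=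
  ⨅ (c : ℕ → Set X) (_ : Z ⊆ ⋃ i, c i), ∑' i, packPre T (c i) s ε

/-- Packing topological entropy of `T` on `Z`. -/
noncomputable def packEntropy (T : X → X) (Z : Set X) : EReal :=
  ⨆ (ε : ℝ) (_ : 0 < ε), sInf ((fun s : ℝ => (s : EReal)) '' {s : ℝ | packM T Z s ε = 0})
variable [MeasurableSpace X] [BorelSpace X]

/-- A probability measure is invariant under `T`. -/
def InvariantProb (T : X → X) (μ : MeasureTheory.ProbabilityMeasure X) : Prop :=
  μ.toMeasure.map T = μ.toMeasure

/-- The `n`-th empirical measure of `x`: the average of Dirac masses along the orbit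
segment `x, Tx, …, T^n x` (of length `n+1`, so that it is defined for every `n`). -/
noncomputable def empirical (T : X → X) (x : X) (n : ℕ) :
    MeasureTheory.ProbabilityMeasure X :=
  ⟨((n + 1 : ℝ≥0∞))⁻¹ • ∑ j ∈ Finset.range (n + 1), MeasureTheory.Measure.dirac (T^[j] x), by
    constructor
    simp [MeasureTheory.Measure.smul_apply, smul_eq_mul]
    rw [ENNReal.inv_mul_cancel] <;> simp⟩

/-- The set `M_x` of weak* limit points of the empirical measures of `x`. -/
def limitMeasures (T : X → X) (x : X) : Set (MeasureTheory.ProbabilityMeasure X) :=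
  {μ | MapClusterPt μ Filter.atTop (fun n => empirical T x n)}

/-- The saturated set `G_K = {x : M_x = K}`. -/
def saturated (T : X → X) (K : Set (MeasureTheory.ProbabilityMeasure X)) : Set X :=
  {x | limitMeasures T x = K}

/-- The support of a probability measure. -/
def measSupp (μ : MeasureTheory.ProbabilityMeasure X) : Set X :=
  {x | ∀ U : Set X, IsOpen U → x ∈ U → 0 < μ.toMeasure U}

/-- The measure center: the closure of the union of supports of invariant measures. -/
noncomputable def measureCenter (T : X → X) : Set X :=
  closure (⋃ (μ : MeasureTheory.ProbabilityMeasure X) (_ : InvariantProb T μ), measSupp μ)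

/-- `β(f)`: the supremum of `∫ f dμ` over invariant probability measures. -/
noncomputable def birkhoffSup (T : X → X) (f : X → ℝ) : ℝ :=
  sSup {r : ℝ | ∃ ν : MeasureTheory.ProbabilityMeasure X,
    InvariantProb T ν ∧ r = ∫ x, f x ∂ν.toMeasure}

/-- The set of initial values of measure-recurrent `f`-optimal orbits: points whose
empirical measures converge to an invariant measure in whose support they lie, and whose
Birkhoff averages of `f` converge to `β(f)`. -/
def mrOptimal (T : X → X) (f : X → ℝ) : Set X :=
  {x | (∃ μ : MeasureTheory.ProbabilityMeasure X,
          Filter.Tendsto (fun n => empirical T x n) Filter.atTop (nhds μ) ∧ x ∈ measSupp μ) ∧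
    Filter.Tendsto (fun n => (∑ i ∈ Finset.range n, f (T^[i] x)) / n)
      Filter.atTop (nhds (birkhoffSup T f))}
/-- The Brin–Katok upper local entropy of `μ` at `x`. -/
noncomputable def upperLocalEntropy (T : X → X) (μ : ProbabilityMeasure X) (x : X) :
    ℝ≥0∞ :=
  ⨆ (ε : ℝ) (_ : 0 < ε),
    Filter.limsup
      (fun n : ℕ =>
        ENNReal.ofReal (-(Real.log ((μ.toMeasure (bowenBall T x n ε)).toReal)) / n))
      Filter.atTop

section AuxLemmas

lemma isOpen_bowenBall {T : X → X} (hT : Continuous T) (x : X) (n : ℕ) (ε : ℝ) :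
    IsOpen (bowenBall T x n ε) := by
  have h : bowenBall T x n ε = ⋂ i ∈ Finset.range n, (T^[i]) ⁻¹' Metric.ball (T^[i] x) ε := by
    ext y
    simp [bowenBall, Metric.mem_ball, dist_comm]
  rw [h]
  exact isOpen_biInter_finset fun i _ => (Metric.isOpen_ball).preimage (hT.iterate i)

lemma packP_anti_s (T : X → X) (Z : Set X) (ε : ℝ) (N : ℕ) {u s : ℝ} (h : u ≤ s) :
    packP T Z s N ε ≤ packP T Z u N ε := by
  refine iSup_mono fun c => iSup_mono' fun hc => ⟨hc, ?_⟩
  refine ENNReal.tsum_le_tsum fun p => ENNReal.ofReal_le_ofReal (Real.exp_le_exp.2 ?_)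
  have : (0:ℝ) ≤ ((p : X × ℕ).2 : ℝ) := Nat.cast_nonneg _
  nlinarith

lemma packPre_anti_s (T : X → X) (Z : Set X) (ε : ℝ) {u s : ℝ} (h : u ≤ s) :
    packPre T Z s ε ≤ packPre T Z u ε :=
  iInf_mono fun N => packP_anti_s T Z ε N h

lemma packM_anti_s (T : X → X) (Z : Set X) (ε : ℝ) {u s : ℝ} (h : u ≤ s) :
    packM T Z s ε ≤ packM T Z u ε := by
  refine iInf_mono fun c => iInf_mono fun _ => ?_
  exact ENNReal.tsum_le_tsum fun i => packPre_anti_s T (c i) ε h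

lemma packP_anti_N (T : X → X) (Z : Set X) (s ε : ℝ) {N M : ℕ} (h : N ≤ M) :
    packP T Z s M ε ≤ packP T Z s N ε := by
  refine iSup_mono fun c => iSup_mono' fun hc => ?_
  exact ⟨⟨hc.1, fun p hp => ⟨(hc.2.1 p hp).1, h.trans (hc.2.1 p hp).2⟩, hc.2.2⟩, le_rfl⟩

lemma exists_pack_cover (T : X → X) (F : Set X) (n : ℕ) {ε' ε₀ : ℝ}
    (hε' : 0 ≤ ε') (hεε : 2 * ε' < ε₀) :
    ∃ S ⊆ F, S.PairwiseDisjoint (fun x => closedBowenBall T x n ε') ∧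
      F ⊆ ⋃ x ∈ S, bowenBall T x n ε₀ := by
  have hz : ∀ c ⊆ {S : Set X | S ⊆ F ∧ S.PairwiseDisjoint (fun x => closedBowenBall T x n ε')}, IsChain (fun x1 x2 => x1 ⊆ x2) c → ∃ ub ∈ {S : Set X | S ⊆ F ∧ S.PairwiseDisjoint (fun x => closedBowenBall T x n ε')}, ∀ s ∈ c, s ⊆ ub := by
    intro c hc hchain
    refine ⟨⋃₀ c, ⟨Set.sUnion_subset fun s hs => (hc hs).1, ?_⟩,
      fun s hs => Set.subset_sUnion_of_mem hs⟩
    intro x hx y hy hxy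
    obtain ⟨s, hsc, hxs⟩ := hx
    obtain ⟨t, htc, hyt⟩ := hy
    rcases hchain.total hsc htc with h | h
    · exact (hc htc).2 (h hxs) hyt hxy
    · exact (hc hsc).2 hxs (h hyt) hxy
  obtain ⟨S, hS⟩ := zorn_subset
      {S : Set X | S ⊆ F ∧ S.PairwiseDisjoint (fun x => closedBowenBall T x n ε')} hz
  · refine ⟨S, hS.prop.1, hS.prop.2, fun y hy => ?_⟩
    by_cases hex : ∃ x ∈ S, ¬ Disjoint (closedBowenBall T x n ε') (closedBowenBall T y n ε')
    · obtain ⟨x, hxS, hnd⟩ := hex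
      obtain ⟨z, hzx, hzy⟩ := Set.not_disjoint_iff.1 hnd
      refine Set.mem_biUnion hxS fun i hi => ?_
      calc dist (T^[i] x) (T^[i] y)
          ≤ dist (T^[i] x) (T^[i] z) + dist (T^[i] z) (T^[i] y) := dist_triangle _ _ _
        _ ≤ ε' + ε' := add_le_add (hzx i hi) (by rw [dist_comm]; exact hzy i hi)
        _ < ε₀ := by linarith
    · push_neg at hex
      have hins : insert y S ∈
          {S : Set X | S ⊆ F ∧ S.PairwiseDisjoint (fun x => closedBowenBall T x n ε')} := by
        refine ⟨Set.insert_subset hy hS.prop.1, ?_⟩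
        rw [Set.pairwiseDisjoint_insert]
        exact ⟨hS.prop.2, fun b hb _ => (hex b hb).symm⟩
      have hyS : y ∈ S := hS.2 hins (Set.subset_insert y S) (Set.mem_insert y S)
      have : Disjoint (closedBowenBall T y n ε') (closedBowenBall T y n ε') := hex y hyS
      have hy' : y ∈ closedBowenBall T y n ε' := fun i _ => by simp [hε']
      exact absurd (disjoint_self.1 this) (Set.nonempty_iff_ne_empty.1 ⟨y, hy'⟩)

lemma packP_lower [SecondCountableTopology X]
    {T : X → X} (hT : Continuous T) (μ : Measure X)
    {s s' ε₀ ε' : ℝ} (hε' : 0 < ε') (hεε : 2 * ε' < ε₀)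
    {E F : Set X} (hFE : F ⊆ E) {n N : ℕ} (hn : N ≤ n)
    (hF : ∀ x ∈ F, μ (bowenBall T x n ε₀) < ENNReal.ofReal (Real.exp (-s' * n))) :
    μ F * ENNReal.ofReal (Real.exp ((s' - s) * n)) ≤ packP T E s N ε' := by
  obtain ⟨S, hSF, hSdisj, hScov⟩ := exists_pack_cover T F n hε'.le hεε
  have hScount : S.Countable := by
    refine Set.PairwiseDisjoint.countable_of_isOpen
      (hSdisj.mono ?_) (fun x _ => isOpen_bowenBall hT x n ε')
      (fun x _ => ⟨x, fun i _ => by simp [hε']⟩)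
    intro x
    exact fun y hy i hi => (hy i hi).le
  have h2 : μ F ≤ ∑' _x : S, ENNReal.ofReal (Real.exp (-s' * n)) := by
    refine le_trans ((measure_mono hScov).trans (measure_biUnion_le μ hScount _)) ?_
    exact ENNReal.tsum_le_tsum fun x => (hF x (hSF x.2)).le
  have hinj : Set.InjOn (fun x : X => (x, n)) S := fun a _ b _ h => congrArg Prod.fst h
  set c : Set (X × ℕ) := (fun x : X => (x, n)) '' S with hcdef
  have hsum : ∑' p : c, ENNReal.ofReal (Real.exp (-s * ((p : X × ℕ).2 : ℝ)))
      = ∑' _x : S, ENNReal.ofReal (Real.exp (-s * (n : ℝ))) :=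
    tsum_image (fun p : X × ℕ => ENNReal.ofReal (Real.exp (-s * (p.2 : ℝ)))) hinj
  have hmem : c.Countable ∧ (∀ p ∈ c, p.1 ∈ E ∧ N ≤ p.2) ∧
      c.PairwiseDisjoint (fun p => closedBowenBall T p.1 p.2 ε') := by
    refine ⟨hScount.image _, ?_, ?_⟩
    · rintro p ⟨x, hx, rfl⟩
      exact ⟨hFE (hSF hx), hn⟩
    · rintro p ⟨x, hx, rfl⟩ q ⟨y, hy, rfl⟩ hpq
      exact hSdisj hx hy fun h => hpq (by rw [h])
  calc μ F * ENNReal.ofReal (Real.exp ((s' - s) * n))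
      ≤ (∑' _x : S, ENNReal.ofReal (Real.exp (-s' * n))) *
          ENNReal.ofReal (Real.exp ((s' - s) * n)) := mul_le_mul_left h2 _
    _ = ∑' _x : S, ENNReal.ofReal (Real.exp (-s * (n : ℝ))) := by
        rw [← ENNReal.tsum_mul_right]
        refine tsum_congr fun x => ?_
        rw [← ENNReal.ofReal_mul (Real.exp_nonneg _), ← Real.exp_add]
        ring_nf
    _ = ∑' p : c, ENNReal.ofReal (Real.exp (-s * ((p : X × ℕ).2 : ℝ))) := hsum.symm
    _ ≤ packP T E s N ε' := by
        rw [packP]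
        exact le_iSup₂_of_le c hmem le_rfl

lemma packPre_lower [SecondCountableTopology X]
    {T : X → X} (hT : Continuous T) (μ : Measure X) [IsFiniteMeasure μ]
    {s s' ε₀ ε' : ℝ} (hss' : s < s') (hε' : 0 < ε') (hεε : 2 * ε' < ε₀)
    {B : Set X}
    (hB : ∀ x ∈ B, ∀ N : ℕ, ∃ n : ℕ, N ≤ n ∧
      μ (bowenBall T x n ε₀) < ENNReal.ofReal (Real.exp (-s' * n)))
    (E : Set X) :
    μ (E ∩ B) * ENNReal.ofReal (1 - Real.exp (-(s' - s))) ≤ packPre T E s ε' := by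
  set δ := s' - s with hδdef
  have hδ : 0 < δ := by rw [hδdef]; linarith
  set m := μ (E ∩ B) with hm
  rcases eq_or_ne m 0 with h0 | h0
  · simp [h0]
  have hmtop : m ≠ ⊤ := measure_ne_top μ _
  rw [packPre]
  refine le_iInf fun N => ?_
  refine le_trans ?_ (packP_anti_N T E s ε' (le_max_left N 1))
  set N' := max N 1 with hN'def
  set E' : ℕ → Set X := fun n =>
    {x | x ∈ E ∩ B ∧ μ (bowenBall T x n ε₀) < ENNReal.ofReal (Real.exp (-s' * n))} with hE'def
  have hcov : E ∩ B ⊆ ⋃ j : ℕ, E' (N' + j) := by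
    intro x hx
    obtain ⟨n, hn1, hn2⟩ := hB x hx.2 N'
    exact Set.mem_iUnion.2 ⟨n - N', ⟨hx, by rwa [Nat.add_sub_cancel' hn1]⟩⟩
  have hsum : m ≤ ∑' j : ℕ, μ (E' (N' + j)) :=
    (measure_mono hcov).trans (measure_iUnion_le _)
  set r : ℝ≥0∞ := ENNReal.ofReal (Real.exp (-δ)) with hrdef
  have hr1 : r < 1 := by
    rw [hrdef, ENNReal.ofReal_lt_one]
    exact Real.exp_lt_one_iff.2 (by linarith)
  have hpow : ∀ k : ℕ, ENNReal.ofReal (Real.exp (-δ * (k : ℝ))) = r ^ k := by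
    intro k
    have h : (-δ * (k : ℝ)) = (k : ℝ) * (-δ) := by ring
    rw [h, Real.exp_nat_mul, hrdef, ← ENNReal.ofReal_pow (Real.exp_nonneg _)]
  have hkey : ∃ j : ℕ, m * ENNReal.ofReal (1 - Real.exp (-δ)) ≤
      μ (E' (N' + j)) * ENNReal.ofReal (Real.exp (δ * ((N' + j : ℕ) : ℝ))) := by
    by_contra hcon
    push_neg at hcon
    set L := m * ENNReal.ofReal (1 - Real.exp (-δ)) with hLdef
    have hstep : ∀ j : ℕ, μ (E' (N' + j)) ≤ L * r ^ (N' + j) := by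
      intro j
      have hcc : ENNReal.ofReal (Real.exp (δ * ((N' + j : ℕ) : ℝ))) *
          ENNReal.ofReal (Real.exp (-δ * ((N' + j : ℕ) : ℝ))) = 1 := by
        rw [← ENNReal.ofReal_mul (Real.exp_nonneg _), ← Real.exp_add]
        norm_num
      calc μ (E' (N' + j))
          = μ (E' (N' + j)) * (ENNReal.ofReal (Real.exp (δ * ((N' + j : ℕ) : ℝ))) *
              ENNReal.ofReal (Real.exp (-δ * ((N' + j : ℕ) : ℝ)))) := by rw [hcc, mul_one]
        _ = (μ (E' (N' + j)) * ENNReal.ofReal (Real.exp (δ * ((N' + j : ℕ) : ℝ)))) *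
              ENNReal.ofReal (Real.exp (-δ * ((N' + j : ℕ) : ℝ))) := by ring
        _ ≤ L * ENNReal.ofReal (Real.exp (-δ * ((N' + j : ℕ) : ℝ))) :=
            mul_le_mul_left (hcon j).le _
        _ = L * r ^ (N' + j) := by rw [hpow]
    have h1r : (1 : ℝ≥0∞) - r = ENNReal.ofReal (1 - Real.exp (-δ)) := by
      rw [ENNReal.ofReal_sub _ (Real.exp_nonneg _), ENNReal.ofReal_one]
    have hc0 : ENNReal.ofReal (1 - Real.exp (-δ)) ≠ 0 := by
      rw [← h1r]
      exact (tsub_pos_of_lt hr1).ne'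
    have hsum2 : m ≤ m * r ^ N' := by
      calc m ≤ ∑' j : ℕ, μ (E' (N' + j)) := hsum
        _ ≤ ∑' j : ℕ, L * (r ^ N' * r ^ j) := by
            refine ENNReal.tsum_le_tsum fun j => ?_
            rw [← pow_add]
            exact hstep j
        _ = L * (r ^ N' * ∑' j : ℕ, r ^ j) := by
            rw [ENNReal.tsum_mul_left, ENNReal.tsum_mul_left]
        _ = L * (r ^ N' * (1 - r)⁻¹) := by rw [ENNReal.tsum_geometric]
        _ = m * (ENNReal.ofReal (1 - Real.exp (-δ)) *
              (ENNReal.ofReal (1 - Real.exp (-δ)))⁻¹) * r ^ N' := by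
            rw [h1r, hLdef]; ring
        _ = m * r ^ N' := by
            rw [ENNReal.mul_inv_cancel hc0 ENNReal.ofReal_ne_top, mul_one]
    have hlt : m * r ^ N' < m * 1 := by
      refine (ENNReal.mul_lt_mul_iff_right h0 hmtop).2 ?_
      calc r ^ N' ≤ r ^ 1 := by
            exact pow_le_pow_right_of_le_one' hr1.le (le_max_right N 1)
        _ = r := pow_one r
        _ < 1 := hr1
    rw [mul_one] at hlt
    exact absurd hsum2 (not_le.2 hlt)
  obtain ⟨j, hj⟩ := hkey
  refine hj.trans ?_
  have hFE' : E' (N' + j) ⊆ E := fun x hx => hx.1.1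
  have hF' : ∀ x ∈ E' (N' + j), μ (bowenBall T x (N' + j) ε₀) <
      ENNReal.ofReal (Real.exp (-s' * ((N' + j : ℕ) : ℝ))) := fun x hx => hx.2
  rw [hδdef]
  exact packP_lower (s := s) hT μ hε' hεε hFE' (Nat.le_add_right N' j) hF'

lemma packM_pos_of_neg (T : X → X) {Z : Set X} (hZ : Z.Nonempty) {u : ℝ} (hu : u ≤ 0) (ε : ℝ) :
    (1 : ℝ≥0∞) ≤ packM T Z u ε := by
  obtain ⟨z, hz⟩ := hZ
  rw [packM]
  refine le_iInf fun c => le_iInf fun hc => ?_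
  obtain ⟨i, hi⟩ := Set.mem_iUnion.1 (hc hz)
  refine le_trans ?_ (ENNReal.le_tsum i)
  rw [packPre]
  refine le_iInf fun N => ?_
  rw [packP]
  refine le_trans ?_ (le_iSup₂_of_le {((z, N) : X × ℕ)}
    ⟨Set.countable_singleton _, ?_, Set.pairwiseDisjoint_singleton _ _⟩ le_rfl)
  · have hrw : (∑' p : ({((z, N) : X × ℕ)} : Set (X × ℕ)),
        ENNReal.ofReal (Real.exp (-u * ((p : X × ℕ).2 : ℝ))))
        = ENNReal.ofReal (Real.exp (-u * (N : ℝ))) :=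
      tsum_singleton ((z, N) : X × ℕ)
        (fun y : X × ℕ => ENNReal.ofReal (Real.exp (-u * (y.2 : ℝ))))
    rw [hrw]
    refine ENNReal.one_le_ofReal.2 (Real.one_le_exp ?_)
    have : (0:ℝ) ≤ (N : ℝ) := Nat.cast_nonneg N
    nlinarith
  · intro p hp
    rw [Set.eq_of_mem_singleton hp]
    exact ⟨hi, le_rfl⟩

end AuxLemmas

/-- For a Borel set `Z`, the packing entropy of `T` on `Z` dominates the
upper local (Brin–Katok) entropy `∫ h̄_μ(T,x) dμ` of every Borel probability measure `μ`
with `μ(Z) = 1`. -/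
theorem upperLocalEntropy_le_packEntropy [CompactSpace X]
    (T : X → X) (hT : Continuous T) (Z : Set X) (hZ : MeasurableSet Z)
    (μ : ProbabilityMeasure X) (hμZ : μ.toMeasure Z = 1) :
    ((∫⁻ x, upperLocalEntropy T μ x ∂μ.toMeasure : ℝ≥0∞) : EReal) ≤ packEntropy T Z := by
  by_contra hcon
  rw [not_le] at hcon
  obtain ⟨qq, hq1, hq2⟩ := EReal.exists_rat_btwn_of_lt hcon
  set q : ℝ := (qq : ℝ) with hqdef
  have hZne : Z.Nonempty := by
    refine MeasureTheory.nonempty_of_measure_ne_zero (μ := μ.toMeasure) (s := Z) ?_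
    rw [hμZ]
    exact one_ne_zero
  rcases lt_or_ge q 0 with hq0 | hq0
  · have h1 : ((0:ℝ) : EReal) ≤ packEntropy T Z := by
      rw [packEntropy]
      refine le_trans ?_ (le_iSup₂_of_le (1:ℝ) one_pos le_rfl)
      refine le_sInf fun b hb => ?_
      obtain ⟨u, hu, rfl⟩ := hb
      rw [Set.mem_setOf_eq] at hu
      rw [EReal.coe_le_coe_iff]
      by_contra hun
      push_neg at hun
      have h2 := packM_pos_of_neg T hZne hun.le 1
      rw [hu] at h2
      simp at h2
    have h3 : (q : EReal) < ((0:ℝ) : EReal) := EReal.coe_lt_coe_iff.2 hq0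
    exact absurd (hq1.trans (h3.trans_le h1)) (lt_irrefl _)
  · have hI : ENNReal.ofReal q < ∫⁻ x, upperLocalEntropy T μ x ∂μ.toMeasure := by
      rw [← EReal.coe_ennreal_lt_coe_ennreal_iff]
      calc ((ENNReal.ofReal q : ℝ≥0∞) : EReal) = (q : EReal) := by
            rw [EReal.coe_ennreal_ofReal]
            exact max_eq_left (EReal.coe_nonneg.2 hq0)
        _ < _ := hq2
    obtain ⟨mm, hm1, hm2⟩ := exists_between hI
    have hmtop : mm ≠ ⊤ := hm2.ne_top
    set s' : ℝ := mm.toReal with hs'def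
    have hmm : ENNReal.ofReal s' = mm := ENNReal.ofReal_toReal hmtop
    have hs'q : q < s' := by
      have h0m : (0:ℝ≥0∞) < mm := lt_of_le_of_lt zero_le hm1
      have hpos := ENNReal.toReal_pos h0m.ne' hmtop
      rw [← hmm] at hm1
      exact (ENNReal.ofReal_lt_ofReal_iff hpos).1 hm1
    have hs'pos : 0 < s' := lt_of_le_of_lt hq0 hs'q
    have hae : μ.toMeasure {x | ENNReal.ofReal s' < upperLocalEntropy T μ x} ≠ 0 := by
      intro h
      have hle : ∀ᵐ x ∂μ.toMeasure, upperLocalEntropy T μ x ≤ ENNReal.ofReal s' := by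
        rw [MeasureTheory.ae_iff]
        have : {x | ¬ upperLocalEntropy T μ x ≤ ENNReal.ofReal s'}
            = {x | ENNReal.ofReal s' < upperLocalEntropy T μ x} := by
          ext x; simp [not_le]
        rw [this]
        exact h
      have hint : ∫⁻ x, upperLocalEntropy T μ x ∂μ.toMeasure ≤ ENNReal.ofReal s' := by
        calc ∫⁻ x, upperLocalEntropy T μ x ∂μ.toMeasure
            ≤ ∫⁻ _x, ENNReal.ofReal s' ∂μ.toMeasure := lintegral_mono_ae hle
          _ = ENNReal.ofReal s' := by simp
      rw [hmm] at hint
      exact absurd hm2 (not_lt.2 hint)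
    set A := {x | ENNReal.ofReal s' < upperLocalEntropy T μ x} with hA
    have hAZ : μ.toMeasure (A ∩ Z) ≠ 0 := by
      intro h
      have hZc : μ.toMeasure Zᶜ = 0 := by
        rw [measure_compl hZ (measure_ne_top _ _), hμZ, measure_univ, tsub_self]
      have hle : μ.toMeasure A ≤ μ.toMeasure (A ∩ Z) + μ.toMeasure Zᶜ := by
        refine le_trans (measure_mono ?_) (measure_union_le _ _)
        intro x hx
        by_cases hxZ : x ∈ Z
        · exact Or.inl ⟨hx, hxZ⟩
        · exact Or.inr hxZ
      rw [h, hZc, add_zero] at hle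
      exact hae (le_antisymm hle zero_le)
    set Bk : ℕ → Set X := fun k => Z ∩ {x | ∀ N : ℕ, ∃ n : ℕ, N ≤ n ∧
        μ.toMeasure (bowenBall T x n (1 / ((k : ℝ) + 1))) <
          ENNReal.ofReal (Real.exp (-s' * n))} with hBkdef
    have hsub : A ∩ Z ⊆ ⋃ k : ℕ, Bk k := by
      rintro x ⟨hxA, hxZ⟩
      rw [hA, Set.mem_setOf_eq, upperLocalEntropy, lt_iSup_iff] at hxA
      obtain ⟨ε, hε⟩ := hxA
      rw [lt_iSup_iff] at hε
      obtain ⟨hεpos, hlim⟩ := hε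
      obtain ⟨k, hk⟩ := exists_nat_one_div_lt hεpos
      refine Set.mem_iUnion.2 ⟨k, hxZ, fun N => ?_⟩
      have hfreq : ∃ n : ℕ, N ≤ n ∧ ENNReal.ofReal s' <
          ENNReal.ofReal (-(Real.log ((μ.toMeasure (bowenBall T x n ε)).toReal)) / n) := by
        by_contra hev
        push_neg at hev
        have hls : Filter.limsup (fun n : ℕ => ENNReal.ofReal
            (-(Real.log ((μ.toMeasure (bowenBall T x n ε)).toReal)) / n)) Filter.atTop
            ≤ ENNReal.ofReal s' :=
          Filter.limsup_le_of_le (h := Filter.eventually_atTop.2 ⟨N, hev⟩)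
        exact absurd hlim (not_lt.2 hls)
      obtain ⟨n, hn, hval⟩ := hfreq
      refine ⟨n, hn, ?_⟩
      have hu : s' < -(Real.log ((μ.toMeasure (bowenBall T x n ε)).toReal)) / n :=
        (ENNReal.ofReal_lt_ofReal_iff_of_nonneg hs'pos.le).1 hval
      have hn0 : (0:ℝ) < n := by
        rcases Nat.eq_zero_or_pos n with h | h
        · exfalso
          rw [h] at hu
          norm_num at hu
          linarith
        · exact_mod_cast h
      have hlog : Real.log ((μ.toMeasure (bowenBall T x n ε)).toReal) < -s' * n := by
        rw [lt_div_iff₀ hn0] at hu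
        linarith
      have hball : μ.toMeasure (bowenBall T x n ε) < ENNReal.ofReal (Real.exp (-s' * n)) := by
        rcases eq_or_lt_of_le (ENNReal.toReal_nonneg :
            (0:ℝ) ≤ (μ.toMeasure (bowenBall T x n ε)).toReal) with ht0 | ht0
        · exfalso
          rw [← ht0, Real.log_zero] at hlog
          nlinarith
        · rw [Real.log_lt_iff_lt_exp ht0] at hlog
          exact (ENNReal.lt_ofReal_iff_toReal_lt (measure_ne_top _ _)).2 hlog
      refine lt_of_le_of_lt (measure_mono ?_) hball
      intro y hy i hi
      exact lt_trans (hy i hi) hk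
    have hBkpos : ∃ k, μ.toMeasure (Bk k) ≠ 0 := by
      by_contra h
      push_neg at h
      have hle := (measure_mono hsub).trans (measure_iUnion_le (μ := μ.toMeasure) (Bk))
      simp only [h, tsum_zero] at hle
      exact hAZ (le_antisymm hle zero_le)
    obtain ⟨k, hk0⟩ := hBkpos
    set ε₀ : ℝ := 1 / ((k:ℝ) + 1) with hε₀def
    have hε₀pos : 0 < ε₀ := by positivity
    set ε' : ℝ := ε₀ / 3 with hε'def
    have hε'pos : 0 < ε' := by positivity
    have hεε : 2 * ε' < ε₀ := by
      rw [hε'def]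
      linarith
    have hBprop : ∀ x ∈ Bk k, ∀ N : ℕ, ∃ n : ℕ, N ≤ n ∧
        μ.toMeasure (bowenBall T x n ε₀) < ENNReal.ofReal (Real.exp (-s' * n)) :=
      fun x hx => hx.2
    set c0 := ENNReal.ofReal (1 - Real.exp (-(s' - q))) with hc0def
    have hc0pos : c0 ≠ 0 := by
      rw [hc0def]
      refine (ENNReal.ofReal_pos.2 ?_).ne'
      have : Real.exp (-(s' - q)) < 1 := Real.exp_lt_one_iff.2 (by linarith)
      linarith
    have hmain : μ.toMeasure (Bk k) * c0 ≤ packM T Z q ε' := by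
      rw [packM]
      refine le_iInf fun cc => le_iInf fun hcc => ?_
      have h1 : μ.toMeasure (Bk k) ≤ ∑' i : ℕ, μ.toMeasure (cc i ∩ Bk k) := by
        refine le_trans (measure_mono ?_) (measure_iUnion_le _)
        intro x hx
        obtain ⟨i, hi⟩ := Set.mem_iUnion.1 (hcc hx.1)
        exact Set.mem_iUnion.2 ⟨i, hi, hx⟩
      calc μ.toMeasure (Bk k) * c0
          ≤ (∑' i : ℕ, μ.toMeasure (cc i ∩ Bk k)) * c0 := mul_le_mul_left h1 _
        _ = ∑' i : ℕ, μ.toMeasure (cc i ∩ Bk k) * c0 := (ENNReal.tsum_mul_right).symm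
        _ ≤ ∑' i : ℕ, packPre T (cc i) q ε' := by
            refine ENNReal.tsum_le_tsum fun i => ?_
            rw [hc0def]
            exact packPre_lower hT μ.toMeasure hs'q hε'pos hεε hBprop (cc i)
    have hfinal : (q : EReal) ≤ packEntropy T Z := by
      rw [packEntropy]
      refine le_trans ?_ (le_iSup₂_of_le ε' hε'pos le_rfl)
      refine le_sInf fun b hb => ?_
      obtain ⟨u, hu, rfl⟩ := hb
      rw [Set.mem_setOf_eq] at hu
      rw [EReal.coe_le_coe_iff]
      by_contra hun
      push_neg at hun
      have h2 : packM T Z q ε' ≤ packM T Z u ε' := packM_anti_s T Z ε' hun.le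
      rw [hu] at h2
      have h3 : μ.toMeasure (Bk k) * c0 = 0 := le_antisymm (hmain.trans h2) zero_le
      rcases mul_eq_zero.1 h3 with h | h
      · exact hk0 h
      · exact hc0pos h
    exact absurd hq1 (not_lt.2 hfinal)
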